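/- Let Λ be a numerical semigroup of rank k(Λ) ≥ 3, with conductor c = c(Λ), multiplicity m = m(Λ), jumps u = λ_2 − λ_1 and v = λ_3 − λ_2, r right generators and σ strong generators. Let X be the number of integers i with 0 ≤ i < v such that none of c+i, c+i+u and c+i+u+m is the sum of two left elements of Λ. Then Λ has exactly C(r,3) + σ(r−1) + X great-grandchildren, where C(r,3) = r(r−1)(r−2)/6. -/
import Mathlib


/-- A numerical semigroup: a cofinite submonoid of ℕ, viewed as a set of naturals. -/
def IsNumericalSemigroup (S : Set ℕ) : Prop :=
  0 ∈ S ∧ (∀ a ∈ S, ∀ b ∈ S, a + b ∈ S) ∧ ∃ N : ℕ, ∀ n : ℕ, N ≤ n → n ∈ S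

/-- The conductor: the smallest `N` such that every `n ≥ N` belongs to `S`. -/
noncomputable def sgConductor (S : Set ℕ) : ℕ :=
  sInf {N : ℕ | ∀ n : ℕ, N ≤ n → n ∈ S}

/-- The genus: the number of gaps. -/
noncomputable def sgGenus (S : Set ℕ) : ℕ :=
  Sᶜ.ncard

/-- The rank `k(Λ) = c(Λ) - g(Λ)`. -/
noncomputable def sgRank (S : Set ℕ) : ℕ :=
  sgConductor S - sgGenus S

/-- The multiplicity: the smallest nonzero element. -/
noncomputable def sgMultiplicity (S : Set ℕ) : ℕ :=
  sInf {n : ℕ | n ∈ S ∧ n ≠ 0}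

/-- The Frobenius number: the largest gap, i.e. the conductor minus one. -/
noncomputable def sgFrobenius (S : Set ℕ) : ℕ :=
  sgConductor S - 1

/-- `sgElem S j` is the element `λ_j` of `S = {λ_0 = 0 < λ_1 < λ_2 < ⋯}`. -/
noncomputable def sgElem (S : Set ℕ) (j : ℕ) : ℕ :=
  Nat.nth (· ∈ S) j

/-- The jump `u_j = λ_{j+1} - λ_j`. -/
noncomputable def sgJump (S : Set ℕ) (j : ℕ) : ℕ :=
  sgElem S (j + 1) - sgElem S j

/-- The left elements: elements of `S` smaller than the Frobenius number. -/
def sgLeftElements (S : Set ℕ) : Set ℕ :=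
  {x : ℕ | x ∈ S ∧ x + 1 < sgConductor S}

/-- A minimal generator: a nonzero element not the sum of two nonzero elements. -/
def IsMinimalGenerator (S : Set ℕ) (x : ℕ) : Prop :=
  x ∈ S ∧ x ≠ 0 ∧ ¬ ∃ a ∈ S, ∃ b ∈ S, a ≠ 0 ∧ b ≠ 0 ∧ a + b = x

/-- A right generator: a minimal generator larger than the Frobenius number. -/
def IsRightGenerator (S : Set ℕ) (x : ℕ) : Prop :=
  IsMinimalGenerator S x ∧ sgFrobenius S < x

/-- A strong generator: a right generator `μ` such that `μ + m(Λ)` is a minimal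
generator of `Λ ∖ {μ}`. -/
noncomputable def IsStrongGenerator (S : Set ℕ) (x : ℕ) : Prop :=
  IsRightGenerator S x ∧ IsMinimalGenerator (S \ {x}) (x + sgMultiplicity S)

/-- A new generator of `Λ`: a minimal generator of `Λ` that is not a minimal
generator of `Λ ∪ {F(Λ)}`. -/
noncomputable def IsNewGenerator (S : Set ℕ) (x : ℕ) : Prop :=
  IsMinimalGenerator S x ∧ ¬ IsMinimalGenerator (S ∪ {sgFrobenius S}) x

/-- `x` (an element `λ_s ≥ c(Λ)`) is an order-`p` seed of `Λ` if
`x + λ_p ≠ λ_i + λ_j` for all `p < i ≤ j < s`, i.e. for all `i ≤ j` with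
`p < i` and `λ_j < x`. -/
noncomputable def IsSeed (S : Set ℕ) (p x : ℕ) : Prop :=
  sgConductor S ≤ x ∧ ∀ i j : ℕ, p < i → i ≤ j → sgElem S j < x →
    x + sgElem S p ≠ sgElem S i + sgElem S j

/-- `T` is a child of `S`: obtained by removing one right generator. -/
def IsChild (T S : Set ℕ) : Prop :=
  ∃ μ : ℕ, IsRightGenerator S μ ∧ T = S \ {μ}

/-- A grandchild: a child of a child. -/
def IsGrandchild (T S : Set ℕ) : Prop :=
  ∃ C : Set ℕ, IsChild C S ∧ IsChild T C

/-- A great-grandchild: a child of a grandchild. -/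
def IsGreatGrandchild (T S : Set ℕ) : Prop :=
  ∃ C : Set ℕ, IsGrandchild C S ∧ IsChild T C

/-- `⟨a,b,c,…⟩|_κ`: the smallest numerical semigroup containing a given set. -/
def sgClosure (A : Set ℕ) : Set ℕ :=
  ⋂₀ {S : Set ℕ | IsNumericalSemigroup S ∧ A ⊆ S}


section Aux13

variable {S : Set ℕ}

lemma aux13_cond_spec (hS : IsNumericalSemigroup S) :
    ∀ n : ℕ, sgConductor S ≤ n → n ∈ S := by
  obtain ⟨N, hN⟩ := hS.2.2
  exact Nat.sInf_mem (⟨N, hN⟩ : Set.Nonempty {N : ℕ | ∀ n : ℕ, N ≤ n → n ∈ S})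

lemma aux13_cond_of (T : Set ℕ) (M : ℕ) (hM : M ∉ T) (h : ∀ n, M < n → n ∈ T) :
    sgConductor T = M + 1 := by
  have h1 : sgConductor T ≤ M + 1 := Nat.sInf_le (fun n hn => h n (by omega))
  rcases Nat.lt_or_ge (sgConductor T) (M+1) with hlt | hge
  · exfalso
    have : sgConductor T ∈ {N : ℕ | ∀ n : ℕ, N ≤ n → n ∈ T} :=
      Nat.sInf_mem ⟨M+1, fun n hn => h n (by omega)⟩
    exact hM (this M (by omega))
  · omega

lemma aux13_frob_notMem (hS : IsNumericalSemigroup S) (hc : sgConductor S ≠ 0) :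
    sgConductor S - 1 ∉ S := by
  intro hmem
  have : sgConductor S ≤ sgConductor S - 1 := by
    apply Nat.sInf_le
    intro n hn
    rcases Nat.eq_or_lt_of_le hn with rfl | h
    · exact hmem
    · exact aux13_cond_spec hS n (by omega)
  omega

lemma aux13_infinite (hS : IsNumericalSemigroup S) : {n : ℕ | n ∈ S}.Infinite := by
  obtain ⟨N, hN⟩ := hS.2.2
  exact (Set.Ici_infinite N).mono (fun n hn => hN n hn)

lemma aux13_mult_mem (hS : IsNumericalSemigroup S) :
    sgMultiplicity S ∈ S ∧ sgMultiplicity S ≠ 0 := by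
  have : Set.Nonempty {n : ℕ | n ∈ S ∧ n ≠ 0} := by
    refine ⟨sgConductor S + 1, aux13_cond_spec hS _ (by omega), by omega⟩
  exact Nat.sInf_mem this

lemma aux13_mult_le (hx : x ∈ S) (hx0 : x ≠ 0) : sgMultiplicity S ≤ x :=
  Nat.sInf_le ⟨hx, hx0⟩

-- nth machinery
lemma aux13_nth_zero (h0 : 0 ∈ S) : sgElem S 0 = 0 := by
  rw [sgElem, Nat.nth_zero]
  exact Nat.sInf_eq_zero.mpr (Or.inl h0)

lemma aux13_nth_mem (hinf : {n : ℕ | n ∈ S}.Infinite) (n : ℕ) : sgElem S n ∈ S :=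
  Nat.nth_mem_of_infinite hinf n

lemma aux13_nth_lt (hinf : {n : ℕ | n ∈ S}.Infinite) {j k : ℕ} (h : j < k) :
    sgElem S j < sgElem S k :=
  (Nat.nth_lt_nth hinf).mpr h

lemma aux13_nth_step (hinf : {n : ℕ | n ∈ S}.Infinite) (j : ℕ) {x : ℕ}
    (hx : x ∈ S) (h : sgElem S j < x) : sgElem S (j+1) ≤ x := by
  classical
  have hcx : Nat.count (· ∈ S) x ≥ j + 1 := by
    have h1 : Nat.count (· ∈ S) (Nat.nth (· ∈ S) j + 1) = j + 1 := by
      rw [Nat.count_succ, if_pos (show Nat.nth (· ∈ S) j ∈ S from aux13_nth_mem hinf j),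
        Nat.count_nth_of_infinite (p := (· ∈ S)) hinf j]
    calc j + 1 = Nat.count (· ∈ S) (sgElem S j + 1) := h1.symm
      _ ≤ Nat.count (· ∈ S) x := Nat.count_monotone _ (by omega)
  have h2 : Nat.nth (· ∈ S) (Nat.count (· ∈ S) x) = x := Nat.nth_count hx
  calc Nat.nth (· ∈ S) (j+1) ≤ Nat.nth (· ∈ S) (Nat.count (· ∈ S) x) :=
        (Nat.nth_le_nth hinf).mpr hcx
    _ = x := h2

lemma aux13_nth_lt_of_count (hinf : {n : ℕ | n ∈ S}.Infinite) {j N : ℕ}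
    [DecidablePred (· ∈ S)] (h : j < Nat.count (· ∈ S) N) : sgElem S j < N := by
  by_contra hle
  push_neg at hle
  have h2 := Nat.count_monotone (· ∈ S) hle
  have h3 := Nat.count_nth_of_infinite (p := (· ∈ S)) hinf j
  rw [show sgElem S j = Nat.nth (· ∈ S) j from rfl] at h2
  rw [h3] at h2
  omega

end Aux13

section Aux13B

/-- The bundled context of facts about a numerical semigroup of rank ≥ 3. -/
structure SGC (S : Set ℕ) (c m e2 e3 u v : ℕ) : Prop where
  hcdef : sgConductor S = c
  hmdef : sgMultiplicity S = m
  h0 : 0 ∈ S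
  hadd : ∀ a ∈ S, ∀ b ∈ S, a + b ∈ S
  hmem : ∀ n : ℕ, c ≤ n → n ∈ S
  hFnot : c - 1 ∉ S
  hc3 : 3 ≤ c
  hm : m ∈ S
  hm2 : 2 ≤ m
  hmmin : ∀ x ∈ S, x ≠ 0 → m ≤ x
  he2 : e2 ∈ S
  he3 : e3 ∈ S
  hue : e2 = m + u
  hve : e3 = e2 + v
  hu1 : 1 ≤ u
  hv1 : 1 ≤ v
  hum : u ≤ m
  hvm : v ≤ m
  he2c : e2 < c
  he3c : e3 ≤ c
  gap2 : ∀ x ∈ S, m < x → e2 ≤ x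
  gap3 : ∀ x ∈ S, e2 < x → e3 ≤ x

variable {S : Set ℕ} {c m e2 e3 u v : ℕ}

lemma aux13_one_notMem (hS : IsNumericalSemigroup S) (hc : 3 ≤ sgConductor S) :
    (1 : ℕ) ∉ S := by
  intro h1
  have hall : ∀ n : ℕ, 1 ≤ n → n ∈ S := by
    intro n hn
    induction n with
    | zero => omega
    | succ k ih =>
      rcases Nat.eq_or_lt_of_le hn with h | h
      · exact h ▸ h1
      · exact hS.2.1 k (ih (by omega)) 1 h1
  have := Nat.sInf_le (s := {N : ℕ | ∀ n : ℕ, N ≤ n → n ∈ S}) hall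
  rw [show sInf {N : ℕ | ∀ n : ℕ, N ≤ n → n ∈ S} = sgConductor S from rfl] at this
  omega

/-- Establish the context from the theorem's hypotheses. -/
lemma aux13_ctx (hS : IsNumericalSemigroup S) (hk : 3 ≤ sgRank S) :
    SGC S (sgConductor S) (sgMultiplicity S) (sgElem S 2) (sgElem S 3)
      (sgElem S 2 - sgElem S 1) (sgElem S 3 - sgElem S 2) := by
  classical
  set cc := sgConductor S with hcc
  have hinf := aux13_infinite hS
  have hmem := aux13_cond_spec hS
  -- genus / rank counting
  have hgenus : Nat.count (· ∈ S) cc + sgGenus S = cc := by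
    have hsub : Sᶜ = ↑((Finset.range cc).filter (fun n => n ∉ S)) := by
      ext n
      simp only [Set.mem_compl_iff, Finset.coe_filter, Finset.mem_range, Set.mem_setOf_eq]
      constructor
      · intro hn
        refine ⟨?_, hn⟩
        by_contra hge
        exact hn (hmem n (by omega))
      · tauto
    have hg : sgGenus S = ((Finset.range cc).filter (fun n => n ∉ S)).card := by
      rw [sgGenus, hsub, Set.ncard_coe_finset]
    rw [hg, Nat.count_eq_card_filter_range]
    have := Finset.card_filter_add_card_filter_not (s := Finset.range cc) (fun n => n ∈ S)
    simpa using this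
  have hrank : 3 ≤ Nat.count (· ∈ S) cc := by
    have h1 : sgRank S = cc - sgGenus S := rfl
    omega
  have hc3 : 3 ≤ cc := by omega
  have hFnot : cc - 1 ∉ S := aux13_frob_notMem hS (by omega)
  have h1not : (1:ℕ) ∉ S := aux13_one_notMem hS hc3
  have hmm := aux13_mult_mem hS
  have hm2 : 2 ≤ sgMultiplicity S := by
    rcases hmm with ⟨hm, hm0⟩
    by_contra h
    interval_cases hm' : sgMultiplicity S <;> simp_all
  -- nth facts
  have h00 : sgElem S 0 = 0 := aux13_nth_zero hS.1
  have he1 : sgElem S 1 = sgMultiplicity S := by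
    have h1le : sgElem S 1 ≤ sgMultiplicity S := by
      have := aux13_nth_step hinf 0 hmm.1 (by rw [h00]; omega)
      exact this
    have h2le : sgMultiplicity S ≤ sgElem S 1 := by
      apply aux13_mult_le (aux13_nth_mem hinf 1)
      have := aux13_nth_lt hinf (show 0 < 1 by omega)
      omega
    omega
  have he2m : sgMultiplicity S < sgElem S 2 := by
    have := aux13_nth_lt hinf (show 1 < 2 by omega); omega
  have he3e2 : sgElem S 2 < sgElem S 3 := aux13_nth_lt hinf (show 2 < 3 by omega)
  have he2c : sgElem S 2 < cc := aux13_nth_lt_of_count hinf (by omega)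
  have hccS : cc ∈ S := hmem cc le_rfl
  have he3c : sgElem S 3 ≤ cc := aux13_nth_step hinf 2 hccS he2c
  have gap2 : ∀ x ∈ S, sgMultiplicity S < x → sgElem S 2 ≤ x := by
    intro x hx hlt
    exact aux13_nth_step hinf 1 hx (by omega)
  have gap3 : ∀ x ∈ S, sgElem S 2 < x → sgElem S 3 ≤ x := fun x hx hlt =>
    aux13_nth_step hinf 2 hx hlt
  have h2m : sgMultiplicity S + sgMultiplicity S ∈ S := hS.2.1 _ hmm.1 _ hmm.1
  have hum : sgElem S 2 ≤ sgMultiplicity S + sgMultiplicity S :=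
    gap2 _ h2m (by omega)
  have hvm : sgElem S 3 ≤ sgElem S 2 + sgMultiplicity S :=
    gap3 _ (hS.2.1 _ (aux13_nth_mem hinf 2) _ hmm.1) (by omega)
  exact {
    hcdef := rfl
    hmdef := rfl
    h0 := hS.1
    hadd := hS.2.1
    hmem := hmem
    hFnot := hFnot
    hc3 := hc3
    hm := hmm.1
    hm2 := hm2
    hmmin := fun x hx hx0 => aux13_mult_le hx hx0
    he2 := aux13_nth_mem hinf 2
    he3 := aux13_nth_mem hinf 3
    hue := by omega
    hve := by omega
    hu1 := by omega
    hv1 := by omega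
    hum := by omega
    hvm := by omega
    he2c := he2c
    he3c := he3c
    gap2 := gap2
    gap3 := gap3 }

end Aux13B

section Aux13C

def aux13SL (S : Set ℕ) (x : ℕ) : Prop :=
  ∃ a ∈ sgLeftElements S, ∃ b ∈ sgLeftElements S, a + b = x

variable {S : Set ℕ} {c m e2 e3 u v : ℕ}

lemma aux13_ns {x a : ℕ} (h : x ≠ a) : x ∉ ({a} : Set ℕ) := by simpa using h

lemma SGC.hmc (H : SGC S c m e2 e3 u v) : m < c := by
  have h1 := H.hue; have h2 := H.he2c; have := H.hu1; omega

lemma SGC.leftF (H : SGC S c m e2 e3 u v) {x : ℕ} (hx : x ∈ S) (hlt : x < c) :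
    x + 1 < c := by
  have : x ≠ c - 1 := fun h => H.hFnot (h ▸ hx)
  have := H.hc3
  omega

lemma SGC.left_mem (H : SGC S c m e2 e3 u v) {x : ℕ} (hx : x ∈ S) (hlt : x < c) :
    x ∈ sgLeftElements S := by
  refine ⟨hx, ?_⟩
  rw [H.hcdef]
  exact H.leftF hx hlt

lemma SGC.SL_decomp (H : SGC S c m e2 e3 u v) {x : ℕ} (h : aux13SL S x) (hx : c ≤ x) :
    ∃ p q : ℕ, p ∈ S ∧ q ∈ S ∧ p ≠ 0 ∧ q ≠ 0 ∧ p + 1 < c ∧ q + 1 < c ∧ p + q = x := by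
  obtain ⟨p, ⟨hp, hpc⟩, q, ⟨hq, hqc⟩, hpq⟩ := h
  rw [H.hcdef] at hpc hqc
  refine ⟨p, q, hp, hq, ?_, ?_, hpc, hqc, hpq⟩ <;> omega

lemma SGC.SL_intro (H : SGC S c m e2 e3 u v) {p q x : ℕ} (hp : p ∈ S) (hq : q ∈ S)
    (hpc : p < c) (hqc : q < c) (hpq : p + q = x) : aux13SL S x :=
  ⟨p, H.left_mem hp hpc, q, H.left_mem hq hqc, hpq⟩

lemma SGC.RG_c_le (H : SGC S c m e2 e3 u v) {μ : ℕ} (h : IsRightGenerator S μ) :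
    c ≤ μ := by
  have h2 := h.2
  rw [sgFrobenius, H.hcdef] at h2
  have := H.hc3
  omega

lemma SGC.RG_gt (H : SGC S c m e2 e3 u v) {μ : ℕ} (hc : c ≤ μ) :
    sgFrobenius S < μ := by
  rw [sgFrobenius, H.hcdef]; have := H.hc3; omega

lemma SGC.RG_lt (H : SGC S c m e2 e3 u v) {μ : ℕ} (h : IsRightGenerator S μ) :
    μ < c + m := by
  by_contra hge
  push_neg at hge
  have hc := H.RG_c_le h
  have hmem : μ - m ∈ S := H.hmem _ (by omega)
  exact h.1.2.2 ⟨m, H.hm, μ - m, hmem, by have := H.hm2; omega, by have := H.hm2; have := H.hc3; omega, by omega⟩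

lemma SGC.RG_noSL (H : SGC S c m e2 e3 u v) {μ : ℕ} (h : IsRightGenerator S μ) :
    ¬ aux13SL S μ := by
  intro hSL
  obtain ⟨p, q, hp, hq, hp0, hq0, _, _, hpq⟩ := H.SL_decomp hSL (H.RG_c_le h)
  exact h.1.2.2 ⟨p, hp, q, hq, hp0, hq0, hpq⟩

lemma SGC.frob_diff1 (H : SGC S c m e2 e3 u v) {a : ℕ} (hac : c ≤ a) :
    sgFrobenius (S \ {a}) = a := by
  have hcond : sgConductor (S \ {a}) = a + 1 := by
    apply aux13_cond_of
    · simp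
    · intro n hn
      exact ⟨H.hmem n (by omega), aux13_ns (by omega)⟩
  rw [sgFrobenius, hcond]
  omega

lemma SGC.frob_diff2 (H : SGC S c m e2 e3 u v) {a b : ℕ} (hac : c ≤ a) (hab : a < b) :
    sgFrobenius ((S \ {a}) \ {b}) = b := by
  have hcond : sgConductor ((S \ {a}) \ {b}) = b + 1 := by
    apply aux13_cond_of
    · simp
    · intro n hn
      exact ⟨⟨H.hmem n (by omega), aux13_ns (by omega)⟩, aux13_ns (by omega)⟩
  rw [sgFrobenius, hcond]
  omega

lemma aux13_mingen_mono {T T' : Set ℕ} {x : ℕ} (hsub : T' ⊆ T) (hx : x ∈ T')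
    (h : IsMinimalGenerator T x) : IsMinimalGenerator T' x := by
  refine ⟨hx, h.2.1, ?_⟩
  rintro ⟨p, hp, q, hq, hp0, hq0, hpq⟩
  exact h.2.2 ⟨p, hsub hp, q, hsub hq, hp0, hq0, hpq⟩

lemma aux13_ggc_iff {S T : Set ℕ} : IsGreatGrandchild T S ↔
    ∃ a b c₃ : ℕ, IsRightGenerator S a ∧ IsRightGenerator (S \ {a}) b ∧
      IsRightGenerator ((S \ {a}) \ {b}) c₃ ∧ T = ((S \ {a}) \ {b}) \ {c₃} := by
  constructor
  · rintro ⟨C, ⟨C', ⟨a, ha, rfl⟩, ⟨b, hb, rfl⟩⟩, ⟨c₃, hc, rfl⟩⟩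
    exact ⟨a, b, c₃, ha, hb, hc, rfl⟩
  · rintro ⟨a, b, c₃, ha, hb, hc, rfl⟩
    exact ⟨(S \ {a}) \ {b}, ⟨S \ {a}, ⟨a, ha, rfl⟩, ⟨b, hb, rfl⟩⟩, ⟨c₃, hc, rfl⟩⟩

lemma SGC.step1 (H : SGC S c m e2 e3 u v) {a b : ℕ} (ha : IsRightGenerator S a) :
    IsRightGenerator (S \ {a}) b ↔
      ((IsRightGenerator S b ∧ a < b) ∨ (b = a + m ∧ IsStrongGenerator S a)) := by
  have hac : c ≤ a := H.RG_c_le ha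
  constructor
  · intro hb
    have hab : a < b := by
      have h2 := hb.2
      rw [H.frob_diff1 hac] at h2
      exact h2
    have hbS : b ∈ S := hb.1.1.1
    by_cases hmin : IsMinimalGenerator S b
    · exact Or.inl ⟨⟨hmin, H.RG_gt (by omega)⟩, hab⟩
    · right
      have hdecomp : ∃ p ∈ S, ∃ q ∈ S, p ≠ 0 ∧ q ≠ 0 ∧ p + q = b := by
        by_contra hno
        exact hmin ⟨hbS, by omega, hno⟩
      obtain ⟨p, hp, q, hq, hp0, hq0, hpq⟩ := hdecomp
      have huse : p = a ∨ q = a := by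
        by_contra hn
        push_neg at hn
        exact hb.1.2.2 ⟨p, ⟨hp, hn.1⟩, q, ⟨hq, hn.2⟩, hp0, hq0, hpq⟩
      -- b = a + z with z ∈ S nonzero
      obtain ⟨z, hz, hz0, hbz⟩ : ∃ z, z ∈ S ∧ z ≠ 0 ∧ b = a + z := by
        rcases huse with rfl | rfl
        · exact ⟨q, hq, hq0, by omega⟩
        · exact ⟨p, hp, hp0, by omega⟩
      have hzm : m ≤ z := H.hmmin z hz hz0
      have hzem : z = m := by
        by_contra hzm'
        have hz2 : m < z := by omega
        apply hb.1.2.2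
        refine ⟨m, ⟨H.hm, aux13_ns (by have := H.hmc; omega)⟩, a + z - m,
          ⟨H.hmem _ (by omega), aux13_ns (by omega)⟩, by have := H.hm2; omega,
          by have := H.hc3; omega, by omega⟩
      refine ⟨by omega, ha, ?_⟩
      rw [H.hmdef]
      rw [hzem] at hbz
      rw [← hbz]
      exact hb.1
  · rintro (⟨hb, hab⟩ | ⟨rfl, hst⟩)
    · refine ⟨aux13_mingen_mono Set.diff_subset ⟨hb.1.1, aux13_ns (by omega)⟩ hb.1, ?_⟩
      rw [H.frob_diff1 hac]; exact hab
    · have := hst.2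
      rw [H.hmdef] at this
      refine ⟨this, ?_⟩
      rw [H.frob_diff1 hac]
      have := H.hm2; omega

lemma SGC.step2 (H : SGC S c m e2 e3 u v) {a b x : ℕ} (ha : IsRightGenerator S a)
    (hb : IsRightGenerator (S \ {a}) b) :
    IsRightGenerator ((S \ {a}) \ {b}) x ↔
      ((IsRightGenerator S x ∧ b < x) ∨
       (x = a + m ∧ IsStrongGenerator S a ∧ b < x) ∨
       (x = b + m ∧ IsMinimalGenerator ((S \ {a}) \ {b}) (b + m))) := by
  have hac : c ≤ a := H.RG_c_le ha
  have hab : a < b := by have h2 := hb.2; rwa [H.frob_diff1 hac] at h2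
  constructor
  · intro hx
    have hbx : b < x := by have h2 := hx.2; rwa [H.frob_diff2 hac hab] at h2
    have hxS : x ∈ S := hx.1.1.1.1
    have hxa : x ≠ a := by omega
    have hxb : x ≠ b := by omega
    by_cases hmin : IsMinimalGenerator S x
    · exact Or.inl ⟨⟨hmin, H.RG_gt (by omega)⟩, hbx⟩
    · have hdecomp : ∃ p ∈ S, ∃ q ∈ S, p ≠ 0 ∧ q ≠ 0 ∧ p + q = x := by
        by_contra hno
        exact hmin ⟨hxS, by omega, hno⟩
      obtain ⟨p, hp, q, hq, hp0, hq0, hpq⟩ := hdecomp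
      have huse : p = a ∨ p = b ∨ q = a ∨ q = b := by
        by_contra hn
        push_neg at hn
        exact hx.1.2.2 ⟨p, ⟨⟨hp, hn.1⟩, hn.2.1⟩, q, ⟨⟨hq, hn.2.2.1⟩, hn.2.2.2⟩,
          hp0, hq0, hpq⟩
      obtain ⟨t, z, ht, hz, hz0, hxz⟩ : ∃ t z, (t = a ∨ t = b) ∧ z ∈ S ∧ z ≠ 0 ∧
          x = t + z := by
        rcases huse with rfl | rfl | rfl | rfl
        · exact ⟨p, q, Or.inl rfl, hq, hq0, by omega⟩
        · exact ⟨p, q, Or.inr rfl, hq, hq0, by omega⟩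
        · exact ⟨q, p, Or.inl rfl, hp, hp0, by omega⟩
        · exact ⟨q, p, Or.inr rfl, hp, hp0, by omega⟩
      have hzm : m ≤ z := H.hmmin z hz hz0
      have hkey : x = a + m ∨ x = b + m := by
        by_contra hn
        push_neg at hn
        have hz2 : m < z := by
          rcases ht with rfl | rfl <;> omega
        -- decomposition (m, t + z - m) avoiding a and b
        apply hx.1.2.2
        have htc : c ≤ t := by rcases ht with rfl | rfl <;> omega
        have h1 : t + z - m ∈ S := H.hmem _ (by omega)
        have h2 : t + z - m ≠ a := by
          rcases ht with rfl | rfl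
          · omega
          · omega
        have h3 : t + z - m ≠ b := by
          rcases ht with rfl | rfl
          · intro hh; apply hn.2; omega
          · omega
        have hbc : c ≤ b := by omega
        exact ⟨m, ⟨⟨H.hm, aux13_ns (by have := H.hmc; omega)⟩,
          aux13_ns (by have := H.hmc; omega)⟩,
          t + z - m, ⟨⟨h1, aux13_ns h2⟩, aux13_ns h3⟩, by have := H.hm2; omega,
          by omega, by omega⟩
      rcases hkey with hxam | hxbm
      · -- x = a + m : show strong
        right; left
        refine ⟨hxam, ⟨ha, ?_⟩, hbx⟩
        rw [H.hmdef]
        refine ⟨⟨hxam ▸ hxS, aux13_ns (by have := H.hm2; omega)⟩, by have := H.hm2; omega, ?_⟩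
        rintro ⟨p', ⟨hp', hpa'⟩, q', ⟨hq', hqa'⟩, hp0', hq0', hpq'⟩
        -- decomposition of a + m in S \ {a}; if it avoids b, contradiction with hx min
        by_cases hpb : p' = b
        · subst hpb
          -- a + m = b + q' with b > a: q' < m nonzero
          have : q' < m := by omega
          have := H.hmmin q' hq' hq0'
          omega
        · by_cases hqb : q' = b
          · subst hqb
            have : p' < m := by omega
            have := H.hmmin p' hp' hp0'
            omega
          · exact hx.1.2.2 ⟨p', ⟨⟨hp', hpa'⟩, hpb⟩, q', ⟨⟨hq', hqa'⟩, hqb⟩,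
              hp0', hq0', by omega⟩
      · exact Or.inr (Or.inr ⟨hxbm, hxbm ▸ hx.1⟩)
  · rintro (⟨hx, hbx⟩ | ⟨rfl, hst, hbx⟩ | ⟨rfl, hmin⟩)
    · refine ⟨aux13_mingen_mono (Set.diff_subset.trans Set.diff_subset)
        ⟨⟨hx.1.1, aux13_ns (by have := H.RG_c_le hx; omega)⟩, aux13_ns (by omega)⟩ hx.1, ?_⟩
      rw [H.frob_diff2 hac hab]; exact hbx
    · have hmin := hst.2
      rw [H.hmdef] at hmin
      refine ⟨aux13_mingen_mono Set.diff_subset ⟨hmin.1, aux13_ns (by omega)⟩ hmin, ?_⟩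
      rw [H.frob_diff2 hac hab]; exact hbx
    · refine ⟨hmin, ?_⟩
      rw [H.frob_diff2 hac hab]
      have := H.hm2; omega

end Aux13C

section Aux13D

variable {S : Set ℕ} {c m e2 e3 u v : ℕ}

/-- A right generator is characterized among `[c, c+m)` by not being a sum of two lefts. -/
lemma SGC.RG_of_noSL (H : SGC S c m e2 e3 u v) {x : ℕ} (hx : c ≤ x) (hlt : x < c + m)
    (h : ¬ aux13SL S x) : IsRightGenerator S x := by
  refine ⟨⟨H.hmem x hx, by have := H.hc3; omega, ?_⟩, H.RG_gt hx⟩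
  rintro ⟨p, hp, q, hq, hp0, hq0, hpq⟩
  rcases Nat.lt_or_ge p c with hpc | hpc
  · rcases Nat.lt_or_ge q c with hqc | hqc
    · exact h (H.SL_intro hp hq hpc hqc hpq)
    · have : p < m := by omega
      have := H.hmmin p hp hp0
      omega
  · have : q < m := by omega
    have := H.hmmin q hq hq0
    omega

/-- E1 forward: triple (a, b, b+m) with b not strong forces the X-shape. -/
lemma SGC.E1fwd (H : SGC S c m e2 e3 u v) {a b : ℕ} (ha : IsRightGenerator S a)
    (hb : IsRightGenerator S b) (hab : a < b) (hns : ¬ IsStrongGenerator S b)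
    (hmin : IsMinimalGenerator ((S \ {a}) \ {b}) (b + m)) :
    b = a + u ∧ a < c + v ∧ ¬ aux13SL S (b + m) := by
  have hac : c ≤ a := H.RG_c_le ha
  have hbc : c ≤ b := H.RG_c_le hb
  have hblt : b < c + m := H.RG_lt hb
  have hm2 := H.hm2
  have hc3 := H.hc3
  have hu1 := H.hu1
  have hv1 := H.hv1
  have hue := H.hue
  have hve := H.hve
  have he2c := H.he2c
  have he3c := H.he3c
  -- b is not strong: get a decomposition of b+m in S \ {b}
  have hnm : ¬ IsMinimalGenerator (S \ {b}) (b + m) := by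
    intro hmg
    exact hns ⟨hb, by rw [H.hmdef]; exact hmg⟩
  have hdec : ∃ p ∈ S \ {b}, ∃ q ∈ S \ {b}, p ≠ 0 ∧ q ≠ 0 ∧ p + q = b + m := by
    by_contra hno
    exact hnm ⟨⟨H.hmem _ (by omega), aux13_ns (by omega)⟩, by omega, hno⟩
  obtain ⟨p, ⟨hpS, hpb⟩, q, ⟨hqS, hqb⟩, hp0, hq0, hpq⟩ := hdec
  simp only [Set.mem_singleton_iff] at hpb hqb
  have huse : p = a ∨ q = a := by
    by_contra hn
    push_neg at hn
    exact hmin.2.2 ⟨p, ⟨⟨hpS, aux13_ns hn.1⟩, aux13_ns hpb⟩,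
      q, ⟨⟨hqS, aux13_ns hn.2⟩, aux13_ns hqb⟩, hp0, hq0, hpq⟩
  obtain ⟨z, hzS, hz0, hzb, hbz⟩ : ∃ z, z ∈ S ∧ z ≠ 0 ∧ z ≠ b ∧ b + m = a + z := by
    rcases huse with rfl | rfl
    · exact ⟨q, hqS, hq0, hqb, by omega⟩
    · exact ⟨p, hpS, hp0, hpb, by omega⟩
  have hzm : m < z := by omega
  have he2z : e2 ≤ z := H.gap2 z hzS hzm
  -- so u ≤ b - a ; consider the decomposition (e2, b + m - e2)
  have hw : b + m - e2 ∈ S := H.hmem _ (by omega)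
  have hwab : b + m - e2 = a ∨ b + m - e2 = b := by
    by_contra hn
    push_neg at hn
    exact hmin.2.2 ⟨e2, ⟨⟨H.he2, aux13_ns (by omega)⟩, aux13_ns (by omega)⟩,
      b + m - e2, ⟨⟨hw, aux13_ns hn.1⟩, aux13_ns hn.2⟩, by omega, by omega, by omega⟩
  have hbu : b = a + u := by
    rcases hwab with h | h <;> omega
  refine ⟨hbu, ?_, ?_⟩
  · -- a < c + v
    by_contra hge
    push_neg at hge
    have hw2 : a - v ∈ S := H.hmem _ (by omega)
    have he3a : e3 ≠ a := by omega
    have he3b : e3 ≠ b := by omega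
    apply hmin.2.2
    exact ⟨e3, ⟨⟨H.he3, aux13_ns he3a⟩, aux13_ns he3b⟩,
      a - v, ⟨⟨hw2, aux13_ns (by omega)⟩, aux13_ns (by omega)⟩,
      by omega, by omega, by omega⟩
  · intro hSL
    obtain ⟨p', q', hp', hq', hp0', hq0', hpc', hqc', hpq'⟩ :=
      H.SL_decomp hSL (by omega)
    exact hmin.2.2 ⟨p', ⟨⟨hp', aux13_ns (by omega)⟩, aux13_ns (by omega)⟩,
      q', ⟨⟨hq', aux13_ns (by omega)⟩, aux13_ns (by omega)⟩, hp0', hq0', hpq'⟩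

/-- E2 forward: triple (a, a+m, a+2m) with a strong forces u = m and the X-shape. -/
lemma SGC.E2fwd (H : SGC S c m e2 e3 u v) {a : ℕ} (ha : IsRightGenerator S a)
    (hst : IsStrongGenerator S a)
    (hmin : IsMinimalGenerator ((S \ {a}) \ {a + m}) (a + 2 * m)) :
    u = m ∧ a < c + v ∧ ¬ aux13SL S (a + m) ∧ ¬ aux13SL S (a + 2 * m) := by
  have hac : c ≤ a := H.RG_c_le ha
  have halt : a < c + m := H.RG_lt ha
  have hm2 := H.hm2
  have hc3 := H.hc3
  have hu1 := H.hu1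
  have hv1 := H.hv1
  have hum := H.hum
  have hue := H.hue
  have hve := H.hve
  have he2c := H.he2c
  have he3c := H.he3c
  have hstm : IsMinimalGenerator (S \ {a}) (a + m) := by
    have := hst.2; rwa [H.hmdef] at this
  have hueq : u = m := by
    by_contra hne
    have hult : u < m := by omega
    -- decomposition (e2, a + 2m - e2) of a + 2m avoiding a, a+m
    apply hmin.2.2
    have h1 : a + 2*m - e2 ∈ S := H.hmem _ (by omega)
    exact ⟨e2, ⟨⟨H.he2, aux13_ns (by omega)⟩, aux13_ns (by omega)⟩,
      a + 2*m - e2, ⟨⟨h1, aux13_ns (by omega)⟩, aux13_ns (by omega)⟩,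
      by omega, by omega, by omega⟩
  refine ⟨hueq, ?_, ?_, ?_⟩
  · by_contra hge
    push_neg at hge
    have hw2 : a - v ∈ S := H.hmem _ (by omega)
    apply hmin.2.2
    exact ⟨e3, ⟨⟨H.he3, aux13_ns (by omega)⟩, aux13_ns (by omega)⟩,
      a - v, ⟨⟨hw2, aux13_ns (by omega)⟩, aux13_ns (by omega)⟩,
      by omega, by omega, by omega⟩
  · intro hSL
    obtain ⟨p', q', hp', hq', hp0', hq0', hpc', hqc', hpq'⟩ :=
      H.SL_decomp hSL (by omega)
    exact hstm.2.2 ⟨p', ⟨hp', aux13_ns (by omega)⟩,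
      q', ⟨hq', aux13_ns (by omega)⟩, hp0', hq0', hpq'⟩
  · intro hSL
    obtain ⟨p', q', hp', hq', hp0', hq0', hpc', hqc', hpq'⟩ :=
      H.SL_decomp hSL (by omega)
    exact hmin.2.2 ⟨p', ⟨⟨hp', aux13_ns (by omega)⟩, aux13_ns (by omega)⟩,
      q', ⟨⟨hq', aux13_ns (by omega)⟩, aux13_ns (by omega)⟩, hp0', hq0', hpq'⟩

end Aux13D

section Aux13E

variable {S : Set ℕ} {c m e2 e3 u v : ℕ}

/-- Converse for the E family: each X-index yields a valid chain. -/
lemma SGC.Econv (H : SGC S c m e2 e3 u v) {i : ℕ} (hi : i < v)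
    (h1 : ¬ aux13SL S (c + i)) (h2 : ¬ aux13SL S (c + i + u))
    (h3 : ¬ aux13SL S (c + i + u + m)) :
    IsRightGenerator S (c + i) ∧ IsRightGenerator (S \ {c + i}) (c + i + u) ∧
      IsRightGenerator ((S \ {c + i}) \ {c + i + u}) (c + i + u + m) := by
  have hm2 := H.hm2
  have hc3 := H.hc3
  have hu1 := H.hu1
  have hv1 := H.hv1
  have hum := H.hum
  have hvm := H.hvm
  have hue := H.hue
  have hve := H.hve
  have he2c := H.he2c
  have he3c := H.he3c
  have hivm : i < m := by omega
  have haR : IsRightGenerator S (c + i) := H.RG_of_noSL (by omega) (by omega) h1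
  rcases Nat.lt_or_ge u m with hult | hueq
  · -- case u < m : here e3 ≤ 2m, so i + u < m
    have h2m : m + m ∈ S := H.hadd m H.hm m H.hm
    have he3le : e3 ≤ m + m := H.gap3 _ h2m (by omega)
    have hium : i + u < m := by omega
    have hbR : IsRightGenerator S (c + i + u) :=
      H.RG_of_noSL (by omega) (by omega) h2
    refine ⟨haR, ?_, ?_⟩
    · rw [H.step1 haR]
      exact Or.inl ⟨hbR, by omega⟩
    · have hbstep : IsRightGenerator (S \ {c + i}) (c + i + u) := by
        rw [H.step1 haR]; exact Or.inl ⟨hbR, by omega⟩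
      rw [H.step2 haR hbstep]
      refine Or.inr (Or.inr ⟨by omega, ?_, by omega, ?_⟩)
      · exact ⟨⟨H.hmem _ (by omega), aux13_ns (by omega)⟩, aux13_ns (by omega)⟩
      · rintro ⟨p, ⟨⟨hpS, hpa⟩, hpb⟩, q, ⟨⟨hqS, hqa⟩, hqb⟩, hp0, hq0, hpq⟩
        simp only [Set.mem_singleton_iff] at hpa hpb hqa hqb
        have key : ∀ p q : ℕ, p ∈ S → q ∈ S → p ≠ 0 → q ≠ 0 →
            p ≠ c + i → p ≠ c + i + u → q ≠ c + i → q ≠ c + i + u →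
            p + q = c + i + u + m → c ≤ q → False := by
          intro p q hpS hqS hp0 hq0 hpa hpb hqa hqb hpq hq
          have hpm : m ≤ p := H.hmmin p hpS hp0
          have hplt : p ≤ m + i + u := by omega
          have hpne : p ≠ m := by intro h; subst h; omega
          have hpe2 : e2 ≤ p := H.gap2 p hpS (by omega)
          -- q ≤ c + i, q ≥ c, q ≠ c + i, so q < c + i
          have hqlt : q < c + i := by omega
          -- then p > e2, so p ≥ e3 — impossible
          have : e3 ≤ p := H.gap3 p hpS (by omega)
          omega
        rcases Nat.lt_or_ge q c with hqc | hqc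
        · rcases Nat.lt_or_ge p c with hpc | hpc
          · exact h3 (H.SL_intro hpS hqS hpc hqc hpq)
          · exact key q p hqS hpS hq0 hp0 hqa hqb hpa hpb (by omega) hpc
        · exact key p q hpS hqS hp0 hq0 hpa hpb hqa hqb hpq hqc
  · -- case u = m
    have hueq' : u = m := by omega
    have hstrong : IsStrongGenerator S (c + i) := by
      refine ⟨haR, ?_⟩
      rw [H.hmdef]
      refine ⟨⟨H.hmem _ (by omega), aux13_ns (by omega)⟩, by omega, ?_⟩
      rintro ⟨p, ⟨hpS, hpa⟩, q, ⟨hqS, hqa⟩, hp0, hq0, hpq⟩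
      simp only [Set.mem_singleton_iff] at hpa hqa
      have key : ∀ p q : ℕ, p ∈ S → q ∈ S → p ≠ 0 → q ≠ 0 →
          p ≠ c + i → q ≠ c + i → p + q = c + i + u → c ≤ q → False := by
        intro p q hpS hqS hp0 hq0 hpa hqa hpq hq
        have hpm : m ≤ p := H.hmmin p hpS hp0
        have hpne : p ≠ m := by intro h; subst h; omega
        have hpe2 : e2 ≤ p := H.gap2 p hpS (by omega)
        omega
      rcases Nat.lt_or_ge q c with hqc | hqc
      · rcases Nat.lt_or_ge p c with hpc | hpc
        · exact h2 (H.SL_intro hpS hqS hpc hqc (by omega))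
        · exact key q p hqS hpS hq0 hp0 hqa hpa (by omega) hpc
      · exact key p q hpS hqS hp0 hq0 hpa hqa (by omega) hqc
    have hbstep : IsRightGenerator (S \ {c + i}) (c + i + u) := by
      rw [H.step1 haR]
      exact Or.inr ⟨by omega, hstrong⟩
    refine ⟨haR, hbstep, ?_⟩
    rw [H.step2 haR hbstep]
    refine Or.inr (Or.inr ⟨by omega, ?_, by omega, ?_⟩)
    · exact ⟨⟨H.hmem _ (by omega), aux13_ns (by omega)⟩, aux13_ns (by omega)⟩
    · rintro ⟨p, ⟨⟨hpS, hpa⟩, hpb⟩, q, ⟨⟨hqS, hqa⟩, hqb⟩, hp0, hq0, hpq⟩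
      simp only [Set.mem_singleton_iff] at hpa hpb hqa hqb
      have key : ∀ p q : ℕ, p ∈ S → q ∈ S → p ≠ 0 → q ≠ 0 →
          p ≠ c + i → p ≠ c + i + u → q ≠ c + i → q ≠ c + i + u →
          p + q = c + i + u + m → c ≤ q → False := by
        intro p q hpS hqS hp0 hq0 hpa hpb hqa hqb hpq hq
        have hpm : m ≤ p := H.hmmin p hpS hp0
        have hplt : p ≤ m + i + u := by omega
        have hpne : p ≠ m := by intro h; subst h; omega
        have hpe2 : e2 ≤ p := H.gap2 p hpS (by omega)
        have hpne2 : p ≠ e2 := by intro h; subst h; omega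
        have : e3 ≤ p := H.gap3 p hpS (by omega)
        omega
      rcases Nat.lt_or_ge q c with hqc | hqc
      · rcases Nat.lt_or_ge p c with hpc | hpc
        · exact h3 (H.SL_intro hpS hqS hpc hqc hpq)
        · exact key q p hqS hpS hq0 hp0 hqa hqb hpa hpb (by omega) hpc
      · exact key p q hpS hqS hp0 hq0 hpa hpb hqa hqb hpq hqc

end Aux13E

section Aux13F

def aux13A (S : Set ℕ) : Set (ℕ×ℕ×ℕ) :=
  {t | IsRightGenerator S t.1 ∧ IsRightGenerator S t.2.1 ∧ IsRightGenerator S t.2.2 ∧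
    t.1 < t.2.1 ∧ t.2.1 < t.2.2}

def aux13B (S : Set ℕ) (m : ℕ) : Set (ℕ×ℕ×ℕ) :=
  {t | ∃ μ ν : ℕ, IsStrongGenerator S μ ∧ IsRightGenerator S ν ∧ ν ≠ μ ∧
    t = (min μ ν, max μ ν, μ + m)}

def aux13E (S : Set ℕ) (c u m v : ℕ) : Set (ℕ×ℕ×ℕ) :=
  {t | ∃ i : ℕ, i < v ∧ ¬ aux13SL S (c+i) ∧ ¬ aux13SL S (c+i+u) ∧
    ¬ aux13SL S (c+i+u+m) ∧ t = (c+i, c+i+u, c+i+u+m)}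

def aux13F (S : Set ℕ) : ℕ×ℕ×ℕ → Set ℕ := fun t => ((S \ {t.1}) \ {t.2.1}) \ {t.2.2}

variable {S : Set ℕ} {c m e2 e3 u v : ℕ}

lemma SGC.classify (H : SGC S c m e2 e3 u v) :
    {T : Set ℕ | IsGreatGrandchild T S} =
      aux13F S '' (aux13A S ∪ aux13B S m ∪ aux13E S c u m v) := by
  have hm2 := H.hm2
  have hc3 := H.hc3
  have hu1 := H.hu1
  ext T
  simp only [Set.mem_setOf_eq, Set.mem_image, Set.mem_union]
  constructor
  · intro hT
    rw [aux13_ggc_iff] at hT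
    obtain ⟨a, b, x, ha, hb, hx, rfl⟩ := hT
    have hac : c ≤ a := H.RG_c_le ha
    have hb' := hb
    rw [H.step1 ha] at hb'
    have hx' := hx
    rw [H.step2 ha hb] at hx'
    rcases hb' with ⟨hbR, hab⟩ | ⟨hbam, hstA⟩
    · rcases hx' with ⟨hxR, hbx⟩ | ⟨hxam, hstA2, hbx⟩ | ⟨hxbm, hminx⟩
      · exact ⟨(a, b, x), Or.inl (Or.inl ⟨ha, hbR, hxR, hab, hbx⟩), rfl⟩
      · refine ⟨(a, b, x), Or.inl (Or.inr ⟨a, b, hstA2, hbR, by omega, ?_⟩), rfl⟩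
        rw [show min a b = a by omega, show max a b = b by omega, hxam]
      · by_cases hstb : IsStrongGenerator S b
        · refine ⟨(a, b, x), Or.inl (Or.inr ⟨b, a, hstb, ha, by omega, ?_⟩), rfl⟩
          rw [show min b a = a by omega, show max b a = b by omega, hxbm]
        · obtain ⟨hbu, hav, hsl3⟩ := H.E1fwd ha hbR hab hstb hminx
          refine ⟨(a, b, x), Or.inr ⟨a - c, by omega, ?_, ?_, ?_, ?_⟩, rfl⟩
          · rw [show c + (a - c) = a by omega]; exact H.RG_noSL ha
          · rw [show c + (a - c) + u = b by omega]; exact H.RG_noSL hbR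
          · rw [show c + (a - c) + u + m = b + m by omega]; exact hsl3
          · simp only [Prod.mk.injEq]
            refine ⟨by omega, by omega, by omega⟩
    · subst hbam
      rcases hx' with ⟨hxR, hbx⟩ | ⟨hxam, hstA2, hbx⟩ | ⟨hxbm, hminx⟩
      · have := H.RG_lt hxR; omega
      · omega
      · rw [show a + m + m = a + 2 * m by omega] at hminx
        obtain ⟨hueq, hav, hsl2, hsl3⟩ := H.E2fwd ha hstA hminx
        refine ⟨(a, a + m, x), Or.inr ⟨a - c, by omega, ?_, ?_, ?_, ?_⟩, rfl⟩
        · rw [show c + (a - c) = a by omega]; exact H.RG_noSL ha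
        · rw [show c + (a - c) + u = a + m by omega]; exact hsl2
        · rw [show c + (a - c) + u + m = a + 2 * m by omega]; exact hsl3
        · simp only [Prod.mk.injEq]
          refine ⟨by omega, by omega, by omega⟩
  · rintro ⟨t, ht, rfl⟩
    rw [aux13_ggc_iff]
    rcases ht with (hA | hB) | hE
    · obtain ⟨h1, h2, h3, h12, h23⟩ := hA
      have hb : IsRightGenerator (S \ {t.1}) t.2.1 :=
        (H.step1 h1).mpr (Or.inl ⟨h2, h12⟩)
      exact ⟨t.1, t.2.1, t.2.2, h1, hb,
        (H.step2 h1 hb).mpr (Or.inl ⟨h3, h23⟩), rfl⟩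
    · obtain ⟨μ, ν, hst, hν, hne, heq⟩ := hB
      have hμR := hst.1
      have hμc := H.RG_c_le hμR
      have hνc := H.RG_c_le hν
      have hνlt := H.RG_lt hν
      rcases Nat.lt_or_ge μ ν with hlt | hge
      · rw [heq, show min μ ν = μ by omega, show max μ ν = ν by omega]
        have hb : IsRightGenerator (S \ {μ}) ν :=
          (H.step1 hμR).mpr (Or.inl ⟨hν, hlt⟩)
        exact ⟨μ, ν, μ + m, hμR, hb,
          (H.step2 hμR hb).mpr (Or.inr (Or.inl ⟨rfl, hst, by omega⟩)), rfl⟩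
      · have hlt : ν < μ := by omega
        rw [heq, show min μ ν = ν by omega, show max μ ν = μ by omega]
        have hb : IsRightGenerator (S \ {ν}) μ :=
          (H.step1 hν).mpr (Or.inl ⟨hμR, hlt⟩)
        have hμlt := H.RG_lt hμR
        have hmg : IsMinimalGenerator ((S \ {ν}) \ {μ}) (μ + m) := by
          have hsub : ((S \ {ν}) \ {μ}) ⊆ S \ {μ} := fun x hx => ⟨hx.1.1, hx.2⟩
          have hmem : μ + m ∈ (S \ {ν}) \ {μ} :=
            ⟨⟨H.hmem _ (by omega), aux13_ns (by omega)⟩, aux13_ns (by omega)⟩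
          have := hst.2
          rw [H.hmdef] at this
          exact aux13_mingen_mono hsub hmem this
        exact ⟨ν, μ, μ + m, hν, hb,
          (H.step2 hν hb).mpr (Or.inr (Or.inr ⟨rfl, hmg⟩)), rfl⟩
    · obtain ⟨i, hi, h1, h2, h3, heq⟩ := hE
      obtain ⟨ha, hb, hx⟩ := H.Econv hi h1 h2 h3
      rw [heq]
      exact ⟨c + i, c + i + u, c + i + u + m, ha, hb, hx, rfl⟩

end Aux13F

section Aux13G

variable {S : Set ℕ} {c m e2 e3 u v : ℕ}

lemma aux13_mem_F {S : Set ℕ} (w : ℕ×ℕ×ℕ) (x : ℕ) :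
    x ∈ aux13F S w ↔ x ∈ S ∧ x ≠ w.1 ∧ x ≠ w.2.1 ∧ x ≠ w.2.2 := by
  simp only [aux13F, Set.mem_diff, Set.mem_singleton_iff]
  tauto

lemma SGC.T_bounds (H : SGC S c m e2 e3 u v) {t : ℕ×ℕ×ℕ}
    (ht : t ∈ aux13A S ∪ aux13B S m ∪ aux13E S c u m v) :
    c ≤ t.1 ∧ t.1 < t.2.1 ∧ t.2.1 < t.2.2 ∧ t.2.2 ≤ c + 3 * m := by
  have hm2 := H.hm2
  have hu1 := H.hu1
  have hum := H.hum
  have hvm := H.hvm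
  rcases ht with (hA | hB) | hE
  · obtain ⟨h1, h2, h3, h12, h23⟩ := hA
    have := H.RG_c_le h1
    have := H.RG_lt h3
    refine ⟨by omega, h12, h23, by omega⟩
  · obtain ⟨μ, ν, hst, hν, hne, heq⟩ := hB
    have h1 := H.RG_c_le hst.1
    have h2 := H.RG_c_le hν
    have h3 := H.RG_lt hst.1
    have h4 := H.RG_lt hν
    subst heq
    simp only
    omega
  · obtain ⟨i, hi, _, _, _, heq⟩ := hE
    subst heq
    simp only
    omega

lemma SGC.T_injOn (H : SGC S c m e2 e3 u v) :
    Set.InjOn (aux13F S) (aux13A S ∪ aux13B S m ∪ aux13E S c u m v) := by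
  intro t ht s hs heq
  obtain ⟨hb1, hb2, hb3, hb4⟩ := H.T_bounds ht
  obtain ⟨hc1, hc2, hc3, hc4⟩ := H.T_bounds hs
  obtain ⟨t1, t2, t3⟩ := t
  obtain ⟨s1, s2, s3⟩ := s
  simp only at hb1 hb2 hb3 hb4 hc1 hc2 hc3 hc4
  have key : ∀ x, c ≤ x → (x = t1 ∨ x = t2 ∨ x = t3 ↔ x = s1 ∨ x = s2 ∨ x = s3) := by
    intro x hx
    have hxS : x ∈ S := H.hmem x hx
    constructor
    · intro hxt
      by_contra hn
      push_neg at hn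
      have : x ∈ aux13F S (s1, s2, s3) :=
        (aux13_mem_F _ x).mpr ⟨hxS, hn.1, hn.2.1, hn.2.2⟩
      rw [← heq] at this
      have := (aux13_mem_F (t1, t2, t3) x).mp this
      simp only at this hxt
      tauto
    · intro hxs
      by_contra hn
      push_neg at hn
      have : x ∈ aux13F S (t1, t2, t3) :=
        (aux13_mem_F _ x).mpr ⟨hxS, hn.1, hn.2.1, hn.2.2⟩
      rw [heq] at this
      have := (aux13_mem_F (s1, s2, s3) x).mp this
      simp only at this hxs
      tauto
  have h1 := (key t1 (by omega)).mp (Or.inl rfl)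
  have h2 := (key t2 (by omega)).mp (Or.inr (Or.inl rfl))
  have h3 := (key t3 (by omega)).mp (Or.inr (Or.inr rfl))
  have h4 := (key s1 (by omega)).mpr (Or.inl rfl)
  have h5 := (key s2 (by omega)).mpr (Or.inr (Or.inl rfl))
  have h6 := (key s3 (by omega)).mpr (Or.inr (Or.inr rfl))
  have e1 : t1 = s1 := by
    have p1 : s1 ≤ t1 := by rcases h1 with h|h|h <;> omega
    have p2 : t1 ≤ s1 := by rcases h4 with h|h|h <;> omega
    omega
  have e2' : t2 = s2 := by
    have p1 : s2 ≤ t2 := by rcases h2 with h|h|h <;> omega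
    have p2 : t2 ≤ s2 := by rcases h5 with h|h|h <;> omega
    omega
  have e3' : t3 = s3 := by
    have p1 : s3 ≤ t3 := by rcases h3 with h|h|h <;> omega
    have p2 : t3 ≤ s3 := by rcases h6 with h|h|h <;> omega
    omega
  simp [e1, e2', e3']

lemma SGC.T_finite (H : SGC S c m e2 e3 u v) :
    (aux13A S ∪ aux13B S m ∪ aux13E S c u m v).Finite := by
  apply Set.Finite.subset
    ((Set.finite_Icc 0 (c+3*m)).prod ((Set.finite_Icc 0 (c+3*m)).prod
      (Set.finite_Icc 0 (c+3*m))))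
  intro t ht
  obtain ⟨h1, h2, h3, h4⟩ := H.T_bounds ht
  exact ⟨⟨by omega, by omega⟩, ⟨by omega, by omega⟩, ⟨by omega, by omega⟩⟩

lemma SGC.disj_AB (H : SGC S c m e2 e3 u v) :
    Disjoint (aux13A S) (aux13B S m) := by
  rw [Set.disjoint_left]
  rintro t hA hB
  obtain ⟨_, _, h3, _, _⟩ := hA
  obtain ⟨μ, ν, hst, hν, hne, heq⟩ := hB
  subst heq
  have h1 := H.RG_lt h3
  have h2 := H.RG_c_le hst.1
  simp only at h1
  omega

lemma SGC.disj_ABE (H : SGC S c m e2 e3 u v) :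
    Disjoint (aux13A S ∪ aux13B S m) (aux13E S c u m v) := by
  have hm2 := H.hm2
  have hu1 := H.hu1
  have hc3 := H.hc3
  have he2c := H.he2c
  have hue := H.hue
  rw [Set.disjoint_left]
  rintro t hAB ⟨i, hi, h1, h2, h3, heq⟩
  rcases hAB with hA | hB
  · obtain ⟨_, _, h3R, _, _⟩ := hA
    have := H.RG_lt h3R
    rw [heq] at this
    simp only at this
    omega
  · obtain ⟨μ, ν, hst, hν, hne, heq2⟩ := hB
    rw [heq2] at heq
    simp only [Prod.mk.injEq] at heq
    obtain ⟨ha, hb, hc'⟩ := heq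
    have hμc := H.RG_c_le hst.1
    have hνc := H.RG_c_le hν
    -- μ is either min or max
    have hμ : μ = c + i ∨ μ = c + i + u := by omega
    rcases hμ with rfl | hμ2
    · omega
    · -- μ = c + i + u strong : contradiction via decomposition e2 + (c+i)
      have hmg := hst.2
      rw [H.hmdef] at hmg
      apply hmg.2.2
      refine ⟨e2, ⟨H.he2, aux13_ns (by omega)⟩, c + i, ⟨H.hmem _ (by omega),
        aux13_ns (by omega)⟩, by omega, by omega, by omega⟩

end Aux13G

section Aux13H

variable {S : Set ℕ} {c m e2 e3 u v : ℕ}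

lemma aux13_sorted3 (x y z : ℕ) (hxy : x ≠ y) (hxz : x ≠ z) (hyz : y ≠ z) :
    ∃ a b c' : ℕ, a < b ∧ b < c' ∧ ({a, b, c'} : Finset ℕ) = {x, y, z} := by
  rcases Nat.lt_trichotomy x y with h1 | h1 | h1
  · rcases Nat.lt_trichotomy y z with h2 | h2 | h2
    · exact ⟨x, y, z, h1, h2, rfl⟩
    · omega
    · rcases Nat.lt_trichotomy x z with h3 | h3 | h3
      · exact ⟨x, z, y, h3, h2, by ext w; simp; tauto⟩
      · omega
      · exact ⟨z, x, y, h3, h1, by ext w; simp; tauto⟩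
  · omega
  · rcases Nat.lt_trichotomy x z with h2 | h2 | h2
    · exact ⟨y, x, z, h1, h2, by ext w; simp; tauto⟩
    · omega
    · rcases Nat.lt_trichotomy y z with h3 | h3 | h3
      · exact ⟨y, z, x, h3, h2, by ext w; simp; tauto⟩
      · omega
      · exact ⟨z, y, x, h3, h1, by ext w; simp; tauto⟩

lemma SGC.R_finite (H : SGC S c m e2 e3 u v) : {μ : ℕ | IsRightGenerator S μ}.Finite :=
  Set.Finite.subset (Set.finite_Icc c (c + m))
    (fun μ h => ⟨H.RG_c_le h, by have := H.RG_lt h; omega⟩)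

lemma SGC.Str_finite (H : SGC S c m e2 e3 u v) :
    {μ : ℕ | IsStrongGenerator S μ}.Finite :=
  Set.Finite.subset H.R_finite (fun μ h => h.1)

lemma SGC.card_A (H : SGC S c m e2 e3 u v) {r : ℕ}
    (hr : r = {μ : ℕ | IsRightGenerator S μ}.ncard) :
    (aux13A S).ncard = Nat.choose r 3 := by
  classical
  have hRfin := H.R_finite
  set RF : Finset ℕ := hRfin.toFinset with hRF
  have hrc : r = RF.card := by
    rw [hr, Set.ncard_eq_toFinset_card _ hRfin]
  set AF : Finset (ℕ×ℕ×ℕ) :=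
    (RF ×ˢ RF ×ˢ RF).filter (fun t => t.1 < t.2.1 ∧ t.2.1 < t.2.2) with hAF
  have hmemRF : ∀ x, x ∈ RF ↔ IsRightGenerator S x := by
    intro x; rw [hRF, Set.Finite.mem_toFinset]; rfl
  have hAset : aux13A S = ↑AF := by
    ext t
    simp only [aux13A, Set.mem_setOf_eq, hAF, Finset.coe_filter, Finset.mem_product,
      Set.mem_setOf_eq, hmemRF]
    tauto
  rw [hAset, Set.ncard_coe_finset, hrc, ← Finset.card_powersetCard 3 RF]
  apply Finset.card_bij (fun t _ => ({t.1, t.2.1, t.2.2} : Finset ℕ))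
  · intro t ht
    simp only [hAF, Finset.mem_filter, Finset.mem_product] at ht
    rw [Finset.mem_powersetCard]
    constructor
    · intro x hx
      simp only [Finset.mem_insert, Finset.mem_singleton] at hx
      rcases hx with rfl | rfl | rfl
      · exact ht.1.1
      · exact ht.1.2.1
      · exact ht.1.2.2
    · exact Finset.card_eq_three.mpr ⟨t.1, t.2.1, t.2.2, by omega, by omega, by omega, rfl⟩
  · intro t ht s hs heq
    simp only [hAF, Finset.mem_filter, Finset.mem_product] at ht hs
    obtain ⟨t1, t2, t3⟩ := t
    obtain ⟨s1, s2, s3⟩ := s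
    simp only at ht hs heq
    have h1 : t1 ∈ ({s1, s2, s3} : Finset ℕ) := heq ▸ (by simp)
    have h2 : t2 ∈ ({s1, s2, s3} : Finset ℕ) := heq ▸ (by simp)
    have h3 : t3 ∈ ({s1, s2, s3} : Finset ℕ) := heq ▸ (by simp)
    have h4 : s1 ∈ ({t1, t2, t3} : Finset ℕ) := heq ▸ (by simp)
    have h5 : s2 ∈ ({t1, t2, t3} : Finset ℕ) := heq ▸ (by simp)
    have h6 : s3 ∈ ({t1, t2, t3} : Finset ℕ) := heq ▸ (by simp)
    simp only [Finset.mem_insert, Finset.mem_singleton] at h1 h2 h3 h4 h5 h6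
    have e1 : t1 = s1 := by
      have p1 : s1 ≤ t1 := by rcases h1 with h|h|h <;> omega
      have p2 : t1 ≤ s1 := by rcases h4 with h|h|h <;> omega
      omega
    have e2' : t2 = s2 := by
      have p1 : s2 ≤ t2 := by rcases h2 with h|h|h <;> omega
      have p2 : t2 ≤ s2 := by rcases h5 with h|h|h <;> omega
      omega
    have e3' : t3 = s3 := by
      have p1 : s3 ≤ t3 := by rcases h3 with h|h|h <;> omega
      have p2 : t3 ≤ s3 := by rcases h6 with h|h|h <;> omega
      omega
    simp [e1, e2', e3']
  · intro s hsmem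
    rw [Finset.mem_powersetCard] at hsmem
    obtain ⟨hsub, hcard⟩ := hsmem
    obtain ⟨x, y, z, hxy, hxz, hyz, rfl⟩ := Finset.card_eq_three.mp hcard
    obtain ⟨a, b, c', hab, hbc, hset⟩ := aux13_sorted3 x y z hxy hxz hyz
    have hamem : a ∈ RF := hsub (by rw [← hset]; simp)
    have hbmem : b ∈ RF := hsub (by rw [← hset]; simp)
    have hcmem : c' ∈ RF := hsub (by rw [← hset]; simp)
    refine ⟨(a, b, c'), ?_, hset⟩
    simp only [hAF, Finset.mem_filter, Finset.mem_product]
    exact ⟨⟨hamem, hbmem, hcmem⟩, hab, hbc⟩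

lemma SGC.card_B (H : SGC S c m e2 e3 u v) {r σ : ℕ}
    (hr : r = {μ : ℕ | IsRightGenerator S μ}.ncard)
    (hσ : σ = {μ : ℕ | IsStrongGenerator S μ}.ncard) :
    (aux13B S m).ncard = σ * (r - 1) := by
  classical
  have hRfin := H.R_finite
  have hSfin := H.Str_finite
  set RF : Finset ℕ := hRfin.toFinset with hRF
  set SF : Finset ℕ := hSfin.toFinset with hSF
  have hrc : r = RF.card := by rw [hr, Set.ncard_eq_toFinset_card _ hRfin]
  have hσc : σ = SF.card := by rw [hσ, Set.ncard_eq_toFinset_card _ hSfin]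
  set PF : Finset (ℕ×ℕ) := (SF ×ˢ RF).filter (fun p => ¬ (p.2 = p.1)) with hPF
  have hmemRF : ∀ x, x ∈ RF ↔ IsRightGenerator S x := by
    intro x; rw [hRF, Set.Finite.mem_toFinset]; rfl
  have hmemSF : ∀ x, x ∈ SF ↔ IsStrongGenerator S x := by
    intro x; rw [hSF, Set.Finite.mem_toFinset]; rfl
  have hBset : aux13B S m =
      ↑(PF.image (fun p : ℕ×ℕ => (min p.1 p.2, max p.1 p.2, p.1 + m))) := by
    ext t
    simp only [aux13B, Set.mem_setOf_eq, Finset.coe_image, Set.mem_image,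
      Finset.mem_coe, hPF, Finset.mem_filter, Finset.mem_product,
      Set.mem_setOf_eq, hmemRF, hmemSF]
    constructor
    · rintro ⟨μ, ν, h1, h2, h3, h4⟩
      exact ⟨(μ, ν), ⟨⟨h1, h2⟩, h3⟩, h4.symm⟩
    · rintro ⟨⟨μ, ν⟩, ⟨⟨h1, h2⟩, h3⟩, h4⟩
      exact ⟨μ, ν, h1, h2, h3, h4.symm⟩
  rw [hBset, Set.ncard_coe_finset]
  have himg : (PF.image (fun p : ℕ×ℕ => (min p.1 p.2, max p.1 p.2, p.1 + m))).card
      = PF.card := by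
    apply Finset.card_image_of_injOn
    intro p hp q hq heq
    simp only [hPF, Finset.mem_coe, Finset.mem_filter, Finset.mem_product] at hp hq
    obtain ⟨p1, p2⟩ := p
    obtain ⟨q1, q2⟩ := q
    simp only [Prod.mk.injEq] at heq ⊢
    obtain ⟨ha, hb, hc'⟩ := heq
    simp only at hp hq
    constructor
    · omega
    · omega
  rw [himg]
  -- PF.card = σ * r - σ
  have htot := Finset.card_filter_add_card_filter_not
    (s := SF ×ˢ RF) (fun p : ℕ×ℕ => p.2 = p.1)
  have hprod : (SF ×ˢ RF).card = σ * r := by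
    rw [Finset.card_product, hrc, hσc]
  have hdiag : ((SF ×ˢ RF).filter (fun p : ℕ×ℕ => p.2 = p.1)).card = σ := by
    rw [hσc]
    apply Finset.card_bij (fun p _ => p.1)
    · intro p hp
      simp only [Finset.mem_filter, Finset.mem_product] at hp
      exact hp.1.1
    · intro p hp q hq heq
      simp only [Finset.mem_filter, Finset.mem_product] at hp hq
      obtain ⟨p1, p2⟩ := p
      obtain ⟨q1, q2⟩ := q
      simp only at hp hq heq
      simp only [Prod.mk.injEq]
      omega
    · intro μ hμ
      refine ⟨(μ, μ), ?_, rfl⟩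
      simp only [Finset.mem_filter, Finset.mem_product]
      refine ⟨⟨hμ, ?_⟩, by trivial⟩
      rw [hSF, Set.Finite.mem_toFinset] at hμ
      rw [hRF, Set.Finite.mem_toFinset]
      exact hμ.1
  have hPFcard : PF.card = σ * r - σ := by
    rw [hPF]
    omega
  rw [hPFcard, Nat.mul_sub, Nat.mul_one]

lemma SGC.card_E (H : SGC S c m e2 e3 u v) :
    (aux13E S c u m v).ncard =
      {i : ℕ | i < v ∧ ¬ aux13SL S (c+i) ∧ ¬ aux13SL S (c+i+u) ∧
        ¬ aux13SL S (c+i+u+m)}.ncard := by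
  have hEimg : aux13E S c u m v =
      (fun i => (c+i, c+i+u, c+i+u+m)) ''
        {i : ℕ | i < v ∧ ¬ aux13SL S (c+i) ∧ ¬ aux13SL S (c+i+u) ∧
          ¬ aux13SL S (c+i+u+m)} := by
    ext t
    simp only [aux13E, Set.mem_setOf_eq, Set.mem_image, Set.mem_setOf_eq]
    constructor
    · rintro ⟨i, h1, h2, h3, h4, h5⟩
      exact ⟨i, ⟨h1, h2, h3, h4⟩, h5.symm⟩
    · rintro ⟨i, ⟨h1, h2, h3, h4⟩, h5⟩
      exact ⟨i, h1, h2, h3, h4, h5.symm⟩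
  rw [hEimg]
  apply Set.ncard_image_of_injective
  intro i j heq
  simp only [Prod.mk.injEq] at heq
  omega

end Aux13H


section Aux13I

variable {S : Set ℕ} {c m e2 e3 u v : ℕ}

lemma SGC.count (H : SGC S c m e2 e3 u v) {r σ X : ℕ}
    (hr : r = {μ : ℕ | IsRightGenerator S μ}.ncard)
    (hσ : σ = {μ : ℕ | IsStrongGenerator S μ}.ncard)
    (hX : X = {i : ℕ | i < v ∧ ¬ aux13SL S (c+i) ∧ ¬ aux13SL S (c+i+u) ∧
        ¬ aux13SL S (c+i+u+m)}.ncard) :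
    {T : Set ℕ | IsGreatGrandchild T S}.ncard = Nat.choose r 3 + σ * (r - 1) + X := by
  rw [H.classify, Set.ncard_image_of_injOn H.T_injOn]
  have hfinA : (aux13A S).Finite :=
    H.T_finite.subset (fun x hx => Set.mem_union_left _ (Set.mem_union_left _ hx))
  have hfinB : (aux13B S m).Finite :=
    H.T_finite.subset (fun x hx => Set.mem_union_left _ (Set.mem_union_right _ hx))
  have hfinE : (aux13E S c u m v).Finite :=
    H.T_finite.subset (fun x hx => Set.mem_union_right _ hx)
  rw [Set.ncard_union_eq H.disj_ABE (hfinA.union hfinB) hfinE,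
    Set.ncard_union_eq H.disj_AB hfinA hfinB,
    H.card_A hr, H.card_B hr hσ, H.card_E, ← hX]

end Aux13I

theorem statement13 (S : Set ℕ) (hS : IsNumericalSemigroup S) (hk : 3 ≤ sgRank S)
    (r σ X : ℕ)
    (hr : r = {μ : ℕ | IsRightGenerator S μ}.ncard)
    (hσ : σ = {μ : ℕ | IsStrongGenerator S μ}.ncard)
    (hX : X = {i : ℕ | i < sgElem S 3 - sgElem S 2 ∧
        (¬ ∃ a ∈ sgLeftElements S, ∃ b ∈ sgLeftElements S,
            a + b = sgConductor S + i) ∧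
        (¬ ∃ a ∈ sgLeftElements S, ∃ b ∈ sgLeftElements S,
            a + b = sgConductor S + i + (sgElem S 2 - sgElem S 1)) ∧
        (¬ ∃ a ∈ sgLeftElements S, ∃ b ∈ sgLeftElements S,
            a + b = sgConductor S + i + (sgElem S 2 - sgElem S 1) +
              sgMultiplicity S)}.ncard) :
    {T : Set ℕ | IsGreatGrandchild T S}.ncard =
      Nat.choose r 3 + σ * (r - 1) + X := by
  have H := aux13_ctx hS hk
  exact H.count hr hσ hX
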